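/- If K ⊆ ℝ^N is a closed convex set containing no line and with dim K ≥ 1, then there exists an affine hyperplane H ⊆ ℝ^N such that H ∩ K is compact and dim(H ∩ K) = dim K − 1. -/

import Mathlib

open Set Filter Metric Topology

section AuxLemmas

theorem aux_isCompact_convexHull {E : Type*} [NormedAddCommGroup E] [NormedSpace ℝ E]
    [FiniteDimensional ℝ E] {s : Set E} (hs : IsCompact s) :
    IsCompact (convexHull ℝ s) := by
  classical
  rcases s.eq_empty_or_nonempty with rfl | ⟨s₀, hs₀⟩
  · simp
  set n := Module.finrank ℝ E + 1 with hn
  set T : (Fin n → ℝ) × (Fin n → E) → E := fun p => ∑ i, p.1 i • p.2 i with hT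
  have hTcont : Continuous T := by
    apply continuous_finset_sum
    intro i _
    exact ((continuous_apply i).comp continuous_fst).smul
      ((continuous_apply i).comp continuous_snd)
  have hA : IsCompact (stdSimplex ℝ (Fin n) ×ˢ (Set.univ.pi fun _ : Fin n => s)) :=
    IsCompact.prod (isCompact_stdSimplex ..) (isCompact_univ_pi fun _ => hs)
  have himg : T '' (stdSimplex ℝ (Fin n) ×ˢ (Set.univ.pi fun _ : Fin n => s))
      = convexHull ℝ s := by
    apply Subset.antisymm
    · rintro x ⟨⟨w, z⟩, ⟨⟨hw0, hw1⟩, hz⟩, rfl⟩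
      exact (convex_convexHull ℝ s).sum_mem (fun i _ => hw0 i) hw1
        (fun i _ => subset_convexHull ℝ s (hz i (mem_univ i)))
    · intro x hx
      obtain ⟨ι, hfin, z, w, hrange, hindep, hpos, hsum, hx⟩ :=
        eq_pos_convex_span_of_mem_convexHull hx
      have hcard : Fintype.card ι ≤ n := by
        calc Fintype.card ι ≤ Module.finrank ℝ (vectorSpan ℝ (range z)) + 1 :=
              hindep.card_le_finrank_succ
          _ ≤ Module.finrank ℝ E + 1 := by
              have := Submodule.finrank_le (vectorSpan ℝ (range z))
              omega
      obtain ⟨e⟩ : Nonempty (ι ↪ Fin n) := Function.Embedding.nonempty_of_card_le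
        (by simpa using hcard)
      set w' : Fin n → ℝ := fun j => if h : ∃ i, e i = j then w h.choose else 0 with hw'
      set z' : Fin n → E := fun j => if h : ∃ i, e i = j then z h.choose else s₀ with hz'
      have hwe : ∀ i, w' (e i) = w i := by
        intro i
        have h : ∃ i', e i' = e i := ⟨i, rfl⟩
        simp only [hw', dif_pos h]
        congr 1
        exact e.injective h.choose_spec
      have hze : ∀ i, z' (e i) = z i := by
        intro i
        have h : ∃ i', e i' = e i := ⟨i, rfl⟩
        simp only [hz', dif_pos h]
        congr 1
        exact e.injective h.choose_spec
      have hwzero : ∀ j, (¬ ∃ i, e i = j) → w' j = 0 := fun j h => dif_neg h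
      have hinj : ∀ i ∈ Finset.univ, ∀ i' ∈ Finset.univ, e i = e i' → i = i' :=
        fun i _ i' _ h => e.injective h
      have hnotim : ∀ j ∈ Finset.univ, j ∉ Finset.univ.image e → ¬ ∃ i, e i = j := by
        intro j _ hj ⟨i, hi⟩
        exact hj (Finset.mem_image.2 ⟨i, Finset.mem_univ i, hi⟩)
      have hsum1 : ∑ j, w' j = 1 := by
        calc ∑ j, w' j = ∑ j ∈ Finset.univ.image e, w' j := by
              symm
              apply Finset.sum_subset (Finset.subset_univ _)
              intro j hj1 hj2
              exact hwzero j (hnotim j hj1 hj2)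
          _ = ∑ i, w' (e i) := Finset.sum_image hinj
          _ = ∑ i, w i := by simp_rw [hwe]
          _ = 1 := hsum
      have hsum2 : ∑ j, w' j • z' j = x := by
        calc ∑ j, w' j • z' j = ∑ j ∈ Finset.univ.image e, w' j • z' j := by
              symm
              apply Finset.sum_subset (Finset.subset_univ _)
              intro j hj1 hj2
              rw [hwzero j (hnotim j hj1 hj2), zero_smul]
          _ = ∑ i, w' (e i) • z' (e i) := Finset.sum_image hinj
          _ = ∑ i, w i • z i := by simp_rw [hwe, hze]
          _ = x := hx
      refine ⟨(w', z'), ⟨⟨fun j => ?_, hsum1⟩, fun j _ => ?_⟩, hsum2⟩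
      · show 0 ≤ w' j
        by_cases h : ∃ i, e i = j
        · simp only [hw', dif_pos h]; exact (hpos _).le
        · rw [hwzero j h]
      · show z' j ∈ s
        by_cases h : ∃ i, e i = j
        · simp only [hz', dif_pos h]; exact hrange ⟨_, rfl⟩
        · simp only [hz', dif_neg h]; exact hs₀
  rw [← himg]
  exact hA.image hTcont


theorem aux_ray_of_unbounded {E : Type*} [NormedAddCommGroup E] [NormedSpace ℝ E]
    [FiniteDimensional ℝ E] {S : Set E} (hcl : IsClosed S) (hcv : Convex ℝ S)
    {z : E} (hz : z ∈ S) (hub : ¬ Bornology.IsBounded S) :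
    ∃ v : E, ‖v‖ = 1 ∧ ∀ t : ℝ, 0 ≤ t → z + t • v ∈ S := by
  have hex : ∀ n : ℕ, ∃ x, x ∈ S ∧ (n : ℝ) < ‖x - z‖ := by
    intro n
    rw [isBounded_iff_forall_norm_le] at hub
    push_neg at hub
    obtain ⟨x, hxS, hx⟩ := hub ((n : ℝ) + ‖z‖)
    refine ⟨x, hxS, ?_⟩
    have : ‖x‖ ≤ ‖x - z‖ + ‖z‖ := by
      calc ‖x‖ = ‖x - z + z‖ := by rw [sub_add_cancel]
        _ ≤ ‖x - z‖ + ‖z‖ := norm_add_le _ _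
    linarith
  choose x hxS hxn using hex
  have hr : ∀ n, (0 : ℝ) < ‖x n - z‖ := fun n =>
    lt_of_le_of_lt (Nat.cast_nonneg n) (hxn n)
  set u : ℕ → E := fun n => ‖x n - z‖⁻¹ • (x n - z) with hu
  have hus : ∀ n, u n ∈ sphere (0 : E) 1 := by
    intro n
    simp only [mem_sphere_iff_norm, sub_zero, hu, norm_smul, norm_inv, norm_norm]
    exact inv_mul_cancel₀ (hr n).ne'
  obtain ⟨v, hv, φ, hφ, hconv⟩ := (isCompact_sphere (0 : E) 1).tendsto_subseq hus
  refine ⟨v, by simpa using hv, fun t ht => ?_⟩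
  have hmem : ∀ n : ℕ, t ≤ ‖x n - z‖ → z + t • u n ∈ S := by
    intro n htn
    have h1 : 0 ≤ t * ‖x n - z‖⁻¹ := mul_nonneg ht (inv_nonneg.2 (hr n).le)
    have h2 : t * ‖x n - z‖⁻¹ ≤ 1 := by
      rw [← div_eq_mul_inv]
      exact div_le_one_of_le₀ htn (hr n).le
    have := hcv hz (hxS n) (by linarith : (0:ℝ) ≤ 1 - t * ‖x n - z‖⁻¹) h1 (by ring)
    convert this using 1
    set a := t * ‖x n - z‖⁻¹
    have : t • u n = a • (x n - z) := by
      rw [hu]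
      rw [smul_smul]
    rw [this, smul_sub, sub_smul, one_smul]
    abel
  have htend : Tendsto (fun n => z + t • u (φ n)) atTop (𝓝 (z + t • v)) :=
    tendsto_const_nhds.add (hconv.const_smul t)
  apply hcl.mem_of_tendsto htend
  filter_upwards [eventually_ge_atTop ⌈t⌉₊] with n hn
  apply hmem
  have h1 : t ≤ (φ n : ℝ) := by
    have : (⌈t⌉₊ : ℝ) ≤ (φ n : ℝ) := by
      exact_mod_cast le_trans hn (hφ.le_apply)
    exact le_trans (Nat.le_ceil t) this
  exact le_trans h1 (hxn (φ n)).le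

theorem aux_ray_basechange {E : Type*} [NormedAddCommGroup E] [NormedSpace ℝ E]
    {S : Set E} (hcl : IsClosed S) (hcv : Convex ℝ S)
    {z x v : E} (hz : z ∈ S) (hx : x ∈ S) (h : ∀ t : ℝ, 0 ≤ t → z + t • v ∈ S) :
    ∀ t : ℝ, 0 ≤ t → x + t • v ∈ S := by
  intro t ht
  set θ : ℕ → ℝ := fun n => 1 / (n + 1) with hθ
  have hθpos : ∀ n, 0 < θ n := fun n => by positivity
  have hθle : ∀ n, θ n ≤ 1 := by
    intro n
    rw [hθ]
    rw [div_le_one (by positivity)]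
    simp
  have hmem : ∀ n, x + θ n • (z - x) + t • v ∈ S := by
    intro n
    have h2 : z + (t / θ n) • v ∈ S := h _ (div_nonneg ht (hθpos n).le)
    have := hcv hx h2 (by linarith [hθle n, hθpos n] : (0:ℝ) ≤ 1 - θ n) (hθpos n).le (by ring)
    convert this using 1
    have : θ n • (z + (t / θ n) • v) = θ n • z + t • v := by
      rw [smul_add, smul_smul, mul_div_cancel₀ _ (hθpos n).ne']
    rw [this, sub_smul, one_smul, smul_sub]
    abel
  have htend : Tendsto (fun n => x + θ n • (z - x) + t • v) atTop (𝓝 (x + t • v)) := by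
    have h0 : Tendsto θ atTop (𝓝 0) := tendsto_one_div_add_atTop_nhds_zero_nat
    have : Tendsto (fun n => θ n • (z - x)) atTop (𝓝 ((0:ℝ) • (z - x))) :=
      h0.smul tendsto_const_nhds
    rw [zero_smul] at this
    have h2 : Tendsto (fun n => x + θ n • (z - x) + t • v) atTop (𝓝 (x + 0 + t • v)) :=
      ((tendsto_const_nhds (x := x)).add this).add (tendsto_const_nhds (x := t • v))
    simpa using h2
  exact hcl.mem_of_tendsto htend (Eventually.of_forall hmem)

end AuxLemmas

/-- A set `S` contains a line if it contains `{x + t • v : t ∈ ℝ}` for some `x` and some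
nonzero vector `v`. -/
def ContainsLine {N : ℕ} (S : Set (EuclideanSpace ℝ (Fin N))) : Prop :=
  ∃ x v : EuclideanSpace ℝ (Fin N), v ≠ 0 ∧ ∀ t : ℝ, x + t • v ∈ S

/-- If `K ⊆ ℝ^N` is a closed convex set containing no line and with `dim K ≥ 1` (dimension of the
affine hull, i.e. rank of the vector span), then there is an affine hyperplane `H` such that
`H ∩ K` is compact of dimension `dim K - 1`. -/
theorem stmt_1 {N : ℕ} (K : Set (EuclideanSpace ℝ (Fin N)))
    (hK : IsClosed K) (hconv : Convex ℝ K) (hline : ¬ ContainsLine K)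
    (hdim : 1 ≤ Module.finrank ℝ (vectorSpan ℝ K)) :
    ∃ (f : EuclideanSpace ℝ (Fin N) →ₗ[ℝ] ℝ) (c : ℝ), f ≠ 0 ∧
      IsCompact ({x | f x = c} ∩ K) ∧
      Module.finrank ℝ (vectorSpan ℝ ({x | f x = c} ∩ K)) =
        Module.finrank ℝ (vectorSpan ℝ K) - 1 := by
  classical
  have hKne : K.Nonempty := by
    rcases K.eq_empty_or_nonempty with h | h
    · rw [h, vectorSpan_empty] at hdim
      simp at hdim
    · exact h
  obtain ⟨x₀, hx₀⟩ := hKne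
  set C : Set (EuclideanSpace ℝ (Fin N)) :=
    {v | ∀ x ∈ K, ∀ t : ℝ, 0 ≤ t → x + t • v ∈ K} with hCdef
  have hC0 : (0 : EuclideanSpace ℝ (Fin N)) ∈ C := fun x hx t _ => by simpa using hx
  have hCsmul : ∀ (a : ℝ), 0 ≤ a → ∀ v ∈ C, a • v ∈ C := by
    intro a ha v hv x hx t ht
    have := hv x hx (t * a) (mul_nonneg ht ha)
    rwa [smul_smul]
  have hCadd : ∀ v ∈ C, ∀ w ∈ C, v + w ∈ C := by
    intro v hv w hw x hx t ht
    have h1 := hv x hx t ht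
    have h2 := hw _ h1 t ht
    have : x + t • v + t • w = x + t • (v + w) := by rw [smul_add]; abel
    rwa [this] at h2
  have hCray : ∀ (z v : EuclideanSpace ℝ (Fin N)), z ∈ K →
      (∀ t : ℝ, 0 ≤ t → z + t • v ∈ K) → v ∈ C :=
    fun z v hzK hray x hx => aux_ray_basechange hK hconv hzK hx hray
  have hCline : ∀ v ∈ C, -v ∈ C → v = 0 := by
    intro v hv hnv
    by_contra hv0
    apply hline
    refine ⟨x₀, v, hv0, fun t => ?_⟩
    rcases le_or_gt 0 t with h | h
    · exact hv x₀ hx₀ t h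
    · have := hnv x₀ hx₀ (-t) (by linarith)
      rwa [smul_neg, neg_smul, neg_neg] at this
  have hCclosed : IsClosed C := by
    have : C = ⋂ x ∈ K, ⋂ t : ℝ, ⋂ _ : 0 ≤ t, (fun v => x + t • v) ⁻¹' K := by
      ext v
      simp only [hCdef, mem_setOf_eq, Set.mem_iInter, Set.mem_preimage]
    rw [this]
    exact isClosed_biInter fun x _ => isClosed_iInter fun t => isClosed_iInter fun _ =>
      hK.preimage (continuous_const.add (continuous_id.const_smul t))
  -- construct f
  have hf : ∃ f : EuclideanSpace ℝ (Fin N) →L[ℝ] ℝ,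
      (∀ v ∈ C, v ≠ 0 → 0 < f v) ∧ ∃ v₀ ∈ vectorSpan ℝ K, f v₀ ≠ 0 := by
    by_cases hCtriv : ∀ v ∈ C, v = 0
    · have hVbot : vectorSpan ℝ K ≠ ⊥ := by
        intro h
        rw [h] at hdim
        simp at hdim
      obtain ⟨v₀, hv₀V, hv₀⟩ := Submodule.exists_mem_ne_zero_of_ne_bot hVbot
      refine ⟨innerSL ℝ v₀, fun v hv hne => absurd (hCtriv v hv) hne, v₀, hv₀V, ?_⟩
      have h1 : (innerSL ℝ v₀) v₀ = (inner ℝ v₀ v₀ : ℝ) := rfl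
      rw [h1]
      exact inner_self_ne_zero.2 hv₀
    · push_neg at hCtriv
      obtain ⟨v₁, hv₁C, hv₁⟩ := hCtriv
      set D := convexHull ℝ (C ∩ sphere (0 : EuclideanSpace ℝ (Fin N)) 1) with hDdef
      have hDcompact : IsCompact D :=
        aux_isCompact_convexHull ((isCompact_sphere 0 1).inter_left hCclosed)
      have hD0 : (0 : EuclideanSpace ℝ (Fin N)) ∉ D := by
        intro h0
        rw [hDdef, mem_convexHull_iff_exists_fintype] at h0
        obtain ⟨ι, hfin, w, zz, hw0, hw1, hzz, hzero⟩ := h0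
        have hjex : ∃ j, w j ≠ 0 := by
          by_contra hall
          push_neg at hall
          rw [Finset.sum_eq_zero (fun i _ => hall i)] at hw1
          exact one_ne_zero hw1.symm
        obtain ⟨j, hj⟩ := hjex
        have hjpos : 0 < w j := (hw0 j).lt_of_ne (Ne.symm hj)
        have hmemC : (∑ i ∈ Finset.univ.erase j, w i • zz i) ∈ C :=
          Finset.sum_induction _ (· ∈ C) (fun a b ha hb => hCadd a ha b hb) hC0
            (fun i _ => hCsmul _ (hw0 i) _ (hzz i).1)
        have hkey : ∑ i ∈ Finset.univ.erase j, w i • zz i = -(w j • zz j) := by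
          have := Finset.add_sum_erase Finset.univ (fun i => w i • zz i) (Finset.mem_univ j)
          rw [hzero] at this
      -- this : w j • zz j + ∑ erase = 0
          exact eq_neg_of_add_eq_zero_right this
        have hneg : -zz j ∈ C := by
          have h1 : (w j)⁻¹ • (∑ i ∈ Finset.univ.erase j, w i • zz i) ∈ C :=
            hCsmul _ (inv_nonneg.2 hjpos.le) _ hmemC
          have h2 : (w j)⁻¹ • (∑ i ∈ Finset.univ.erase j, w i • zz i) = -zz j := by
            rw [hkey, smul_neg, smul_smul, inv_mul_cancel₀ hj, one_smul]
          rwa [h2] at h1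
        have := hCline (zz j) (hzz j).1 hneg
        have hnorm := (hzz j).2
        rw [this] at hnorm
        simp at hnorm
      obtain ⟨f, u, hfu, hfD⟩ := geometric_hahn_banach_point_closed
        (convex_convexHull ℝ _) hDcompact.isClosed hD0
      have hu : 0 < u := by simpa using hfu
      have hfC : ∀ v ∈ C, v ≠ 0 → 0 < f v := by
        intro v hv hne
        have hnv : (0 : ℝ) < ‖v‖ := norm_pos_iff.2 hne
        have hw : ‖v‖⁻¹ • v ∈ C ∩ sphere (0 : EuclideanSpace ℝ (Fin N)) 1 := by
          refine ⟨hCsmul _ (inv_nonneg.2 hnv.le) _ hv, ?_⟩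
          simp [norm_smul, inv_mul_cancel₀ hnv.ne']
        have h1 := hfD _ (subset_convexHull ℝ _ hw)
        rw [map_smul, smul_eq_mul] at h1
        have h2 : 0 < ‖v‖⁻¹ * f v := hu.trans h1
        have h3 := mul_pos hnv h2
        rwa [← mul_assoc, mul_inv_cancel₀ hnv.ne', one_mul] at h3
      have hv₁V : v₁ ∈ vectorSpan ℝ K := by
        have h1 : x₀ + (1 : ℝ) • v₁ ∈ K := hv₁C x₀ hx₀ 1 zero_le_one
        have h2 := vsub_mem_vectorSpan ℝ h1 hx₀
        simpa using h2
      exact ⟨f, hfC, v₁, hv₁V, (hfC v₁ hv₁C hv₁).ne'⟩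
  obtain ⟨f, hfC, v₀, hv₀V, hv₀⟩ := hf
  obtain ⟨z₀, hz₀⟩ := Set.Nonempty.intrinsicInterior hconv ⟨x₀, hx₀⟩
  have hz₀K : z₀ ∈ K := intrinsicInterior_subset hz₀
  set c := f z₀ with hcdef
  set S : Set (EuclideanSpace ℝ (Fin N)) := {x | f x = c} ∩ K with hSdef
  have hSclosed : IsClosed S := (isClosed_eq (map_continuous f) continuous_const).inter hK
  have hSconv : Convex ℝ S :=
    (convex_hyperplane ((f : EuclideanSpace ℝ (Fin N) →ₗ[ℝ] ℝ).isLinear) c).inter hconv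
  have hz₀S : z₀ ∈ S := ⟨rfl, hz₀K⟩
  have hSbdd : Bornology.IsBounded S := by
    by_contra hub
    obtain ⟨v, hv1, hray⟩ := aux_ray_of_unbounded hSclosed hSconv hz₀S hub
    have hvne : v ≠ 0 := by
      intro h
      rw [h] at hv1
      simp at hv1
    have hvC : v ∈ C := hCray z₀ v hz₀K (fun t ht => (hray t ht).2)
    have hfv0 : f v = 0 := by
      have h1 := (hray 1 zero_le_one).1
      simp only [mem_setOf_eq, one_smul, map_add] at h1
      rw [hcdef] at h1
      linarith
    exact absurd hfv0 (hfC v hvC hvne).ne'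
  have hScompact := Metric.isCompact_of_isClosed_isBounded hSclosed hSbdd
  set V := vectorSpan ℝ K with hVdef
  set W := V ⊓ LinearMap.ker (f : EuclideanSpace ℝ (Fin N) →ₗ[ℝ] ℝ) with hWdef
  have hle1 : vectorSpan ℝ S ≤ W := by
    rw [vectorSpan_def, Submodule.span_le]
    rintro u hu
    obtain ⟨a, ha, b, hb, rfl⟩ := hu
    rw [SetLike.mem_coe, hWdef, Submodule.mem_inf]
    constructor
    · exact vsub_mem_vectorSpan ℝ ha.2 hb.2
    · rw [LinearMap.mem_ker]
      have : (f : EuclideanSpace ℝ (Fin N) →ₗ[ℝ] ℝ) (a -ᵥ b) = f a - f b := by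
        simp [vsub_eq_sub]
      rw [this, ha.1, hb.1, sub_self]
  have hle2 : W ≤ vectorSpan ℝ S := by
    intro u hu
    rw [hWdef, Submodule.mem_inf] at hu
    obtain ⟨huV, huK⟩ := hu
    obtain ⟨y, hy, hyz⟩ := hz₀
    have hudir : u ∈ (affineSpan ℝ K).direction := by
      rw [direction_affineSpan]
      exact huV
    set γ : ℝ → affineSpan ℝ K := fun t =>
      ⟨z₀ + t • u, by
        have h1 : (t • u) +ᵥ z₀ ∈ affineSpan ℝ K :=
          AffineSubspace.vadd_mem_of_mem_direction (Submodule.smul_mem _ t hudir)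
            (subset_affineSpan ℝ K hz₀K)
        simpa [vadd_eq_add, add_comm] using h1⟩ with hγdef
    have hγcont : Continuous γ :=
      Continuous.subtype_mk (continuous_const.add (continuous_id.smul continuous_const)) _
    have hγ0 : γ 0 = y := by
      apply Subtype.ext
      simp [hγdef, hyz]
    have hy' : γ 0 ∈ interior ((↑) ⁻¹' K : Set (affineSpan ℝ K)) := by
      rw [hγ0]; exact hy
    have hev : ∀ᶠ t : ℝ in 𝓝 0, γ t ∈ interior ((↑) ⁻¹' K : Set (affineSpan ℝ K)) :=
      (hγcont.tendsto 0).eventually (isOpen_interior.eventually_mem hy')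
    obtain ⟨δ, hδ, hball⟩ := Metric.eventually_nhds_iff.mp hev
    set ε := δ / 2 with hε
    have hεpos : 0 < ε := by positivity
    have hεmem : γ ε ∈ interior ((↑) ⁻¹' K : Set (affineSpan ℝ K)) := by
      apply hball
      rw [Real.dist_eq, sub_zero, abs_of_pos hεpos]
      linarith
    have hKmem : z₀ + ε • u ∈ K := by
      have h1 := interior_subset hεmem
      exact h1
    have hfu : f u = 0 := huK
    have hSmem : z₀ + ε • u ∈ S := by
      refine ⟨?_, hKmem⟩
      show f (z₀ + ε • u) = c
      rw [map_add, map_smul, hfu, smul_zero, add_zero, hcdef]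
    have hvs := vsub_mem_vectorSpan ℝ hSmem hz₀S
    have heq : (z₀ + ε • u) -ᵥ z₀ = ε • u := by
      rw [vsub_eq_sub]; abel
    rw [heq] at hvs
    have := Submodule.smul_mem (vectorSpan ℝ S) ε⁻¹ hvs
    rwa [smul_smul, inv_mul_cancel₀ hεpos.ne', one_smul] at this
  have hVS : vectorSpan ℝ S = W := le_antisymm hle1 hle2
  have hrank : Module.finrank ℝ W + 1 = Module.finrank ℝ V := by
    set g := (f : EuclideanSpace ℝ (Fin N) →ₗ[ℝ] ℝ).comp V.subtype with hg
    have hker : W = Submodule.map V.subtype (LinearMap.ker g) := by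
      rw [hg, LinearMap.ker_comp, Submodule.map_comap_subtype]
    have hfr : Module.finrank ℝ W = Module.finrank ℝ (LinearMap.ker g) := by
      rw [hker, Submodule.finrank_map_subtype_eq]
    have hrange : LinearMap.range g = ⊤ := by
      rw [eq_top_iff]
      rintro y -
      refine ⟨(y / f v₀) • ⟨v₀, hv₀V⟩, ?_⟩
      show f ((y / f v₀) • v₀) = y
      rw [map_smul, smul_eq_mul]
      field_simp
    have hrn := LinearMap.finrank_range_add_finrank_ker g
    rw [hrange, finrank_top] at hrn
    rw [hfr]
    have : Module.finrank ℝ ℝ = 1 := Module.finrank_self ℝ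
    omega
  refine ⟨(f : EuclideanSpace ℝ (Fin N) →ₗ[ℝ] ℝ), c, ?_, ?_, ?_⟩
  · intro h
    apply hv₀
    have := DFunLike.congr_fun h v₀
    simpa using this
  · have : {x | (f : EuclideanSpace ℝ (Fin N) →ₗ[ℝ] ℝ) x = c} ∩ K = S := by
      rw [hSdef]
      congr 1
    rwa [this]
  · have hset : {x | (f : EuclideanSpace ℝ (Fin N) →ₗ[ℝ] ℝ) x = c} ∩ K = S := by
      rw [hSdef]
      congr 1
    rw [hset, hVS]
    omega
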